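/- arXiv:2208.12404 — 5 statements merged into one kernel-verified Lean document; each statement's English description precedes it below -/
import Mathlib

section
/- Let F be a field and A, B ∈ SL(2,F) with tr(A·B·A⁻¹·B⁻¹) = 1. Then the element g = A·B·A⁻¹·B⁻¹·A satisfies tr(g) = 0, tr(g·B) = 0, and tr(g·B·A) = 0. -/
open Matrix

theorem involutions_from_comm_trace_one {F : Type*} [Field F]
    (A B : Matrix.SpecialLinearGroup (Fin 2) F)
    (h : Matrix.trace ((A * B * A⁻¹ * B⁻¹ : Matrix.SpecialLinearGroup (Fin 2) F) :
      Matrix (Fin 2) (Fin 2) F) = 1) :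
    Matrix.trace ((A * B * A⁻¹ * B⁻¹ * A : Matrix.SpecialLinearGroup (Fin 2) F) :
      Matrix (Fin 2) (Fin 2) F) = 0 ∧
    Matrix.trace ((A * B * A⁻¹ * B⁻¹ * A * B : Matrix.SpecialLinearGroup (Fin 2) F) :
      Matrix (Fin 2) (Fin 2) F) = 0 ∧
    Matrix.trace ((A * B * A⁻¹ * B⁻¹ * A * B * A : Matrix.SpecialLinearGroup (Fin 2) F) :
      Matrix (Fin 2) (Fin 2) F) = 0 := by
  have hA : Matrix.det (A : Matrix (Fin 2) (Fin 2) F) = 1 := A.2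
  have hB : Matrix.det (B : Matrix (Fin 2) (Fin 2) F) = 1 := B.2
  rw [Matrix.det_fin_two] at hA hB
  simp only [Matrix.SpecialLinearGroup.coe_mul, Matrix.SpecialLinearGroup.coe_inv,
    Matrix.adjugate_fin_two, Matrix.trace_fin_two, Matrix.mul_apply, Fin.sum_univ_two,
    Matrix.cons_val', Matrix.cons_val_zero, Matrix.cons_val_one, Matrix.head_cons,
    Matrix.of_apply, Matrix.empty_val', Matrix.cons_val_fin_one, Matrix.head_fin_const] at h ⊢
  set a := (A : Matrix (Fin 2) (Fin 2) F) 0 0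
  set b := (A : Matrix (Fin 2) (Fin 2) F) 0 1
  set c := (A : Matrix (Fin 2) (Fin 2) F) 1 0
  set d := (A : Matrix (Fin 2) (Fin 2) F) 1 1
  set e := (B : Matrix (Fin 2) (Fin 2) F) 0 0
  set f := (B : Matrix (Fin 2) (Fin 2) F) 0 1
  set g := (B : Matrix (Fin 2) (Fin 2) F) 1 0
  set k := (B : Matrix (Fin 2) (Fin 2) F) 1 1
  refine ⟨?_, ?_, ?_⟩
  · linear_combination (d + a) * h + (d*f*g - d*e*k + a*f*g - a*e*k) * hA + (- d - a) * hB
  · linear_combination (d*k + c*f + b*g + a*e) * h +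
      (d*f*g*k - d*e*k*k + c*f*f*g - c*e*f*k + b*f*g*g - b*e*g*k + a*e*f*g - a*e*e*k) * hA +
      (- d*k - c*f - b*g - a*e) * hB
  · linear_combination
      (- k - e + d*d*k + c*d*f + b*d*g + a*d*k + a*d*e + a*c*f + a*b*g + a*a*e) * h +
      (k + e + 2*d*d*f*g*k - d*d*e*k*k + d*d*e*f*g - c*d*f*k*k + c*d*f*f*g - c*d*e*f*k +
        c*d*e*e*f - c*c*f*f*k - c*c*e*f*f - b*d*g*k*k + b*d*f*g*g - b*d*e*g*k + b*d*e*e*g +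
        b*c*k*k*k + b*c*f*g*k + b*c*e*f*g + b*c*e*e*e - b*b*g*g*k - b*b*e*g*g - 2*a*d*e*k*k -
        2*a*d*e*e*k + a*c*f*k*k + a*c*f*f*g - a*c*e*f*k - a*c*e*e*f + a*b*g*k*k + a*b*f*g*g -
        a*b*e*g*k - a*b*e*e*g + a*a*f*g*k + 2*a*a*e*f*g - a*a*e*e*k) * hA +
      (- d*d*k - c*d*f - b*d*g - b*c*k - b*c*e - a*c*f - a*b*g - a*a*e) * hB
end

section
/- Let F be a field and A, B ∈ SL(2,F), and suppose t = tr(A·B·A⁻¹·B⁻¹) satisfies t² − t − 1 = 0. Then the element g = (A·B·A⁻¹·B⁻¹)²·A satisfies tr(g) = tr(A)·(t² − t − 1) = 0. -/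
open Matrix

lemma adj_eq {F : Type*} [Field F] (M : Matrix (Fin 2) (Fin 2) F) :
    adjugate M = (Matrix.trace M) • (1 : Matrix (Fin 2) (Fin 2) F) - M := by
  rw [adjugate_fin_two, trace_fin_two]
  ext i j
  fin_cases i <;> fin_cases j <;> simp [Matrix.one_apply]

theorem trace_comm_sq_mul {F : Type*} [Field F]
    (A B : Matrix.SpecialLinearGroup (Fin 2) F) (t : F)
    (ht : t = Matrix.trace ((A * B * A⁻¹ * B⁻¹ : Matrix.SpecialLinearGroup (Fin 2) F) :
      Matrix (Fin 2) (Fin 2) F))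
    (hq : t ^ 2 - t - 1 = 0) :
    Matrix.trace (((A * B * A⁻¹ * B⁻¹) ^ 2 * A : Matrix.SpecialLinearGroup (Fin 2) F) :
      Matrix (Fin 2) (Fin 2) F) =
      Matrix.trace ((A : Matrix.SpecialLinearGroup (Fin 2) F) : Matrix (Fin 2) (Fin 2) F) *
        (t ^ 2 - t - 1) ∧
    Matrix.trace (((A * B * A⁻¹ * B⁻¹) ^ 2 * A : Matrix.SpecialLinearGroup (Fin 2) F) :
      Matrix (Fin 2) (Fin 2) F) = 0 := by
  set C : Matrix.SpecialLinearGroup (Fin 2) F := A * B * A⁻¹ * B⁻¹ with hC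
  set M : Matrix (Fin 2) (Fin 2) F := (C : Matrix (Fin 2) (Fin 2) F) with hM
  set N : Matrix (Fin 2) (Fin 2) F := (A : Matrix (Fin 2) (Fin 2) F) with hN
  set a : F := Matrix.trace N with ha
  have hdetM : M.det = 1 := C.2
  -- Cayley-Hamilton for the commutator: M * M = t • M - 1
  have hCH : M * M = t • M - 1 := by
    have h1 : M * adjugate M = M.det • 1 := Matrix.mul_adjugate M
    rw [adj_eq, hdetM, one_smul, Matrix.mul_sub, Matrix.mul_smul, Matrix.mul_one, ← ht] at h1
    linear_combination (norm := noncomm_ring) -h1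
  -- A⁻¹ as a matrix
  have hAinv : ((A⁻¹ : Matrix.SpecialLinearGroup (Fin 2) F) : Matrix (Fin 2) (Fin 2) F)
      = a • 1 - N := by
    rw [Matrix.SpecialLinearGroup.coe_inv, adj_eq, ha, hN]
  have htrAinv : Matrix.trace ((A⁻¹ : Matrix.SpecialLinearGroup (Fin 2) F) :
      Matrix (Fin 2) (Fin 2) F) = a := by
    rw [hAinv, Matrix.trace_sub, Matrix.trace_smul, Matrix.trace_one, ← ha]
    ring_nf
    simp [Fin.sum_univ_two]
    ring
  -- tr(M * A⁻¹) = tr(A⁻¹) = a by conjugation invariance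
  have hMAinv : Matrix.trace (M * ((A⁻¹ : Matrix.SpecialLinearGroup (Fin 2) F) :
      Matrix (Fin 2) (Fin 2) F)) = a := by
    have h2 : (C * A⁻¹ : Matrix.SpecialLinearGroup (Fin 2) F)
        = (A * B) * A⁻¹ * (A * B)⁻¹ := by rw [hC]; group
    have h3 : M * ((A⁻¹ : Matrix.SpecialLinearGroup (Fin 2) F) : Matrix (Fin 2) (Fin 2) F)
        = ((A*B : Matrix.SpecialLinearGroup (Fin 2) F) : Matrix (Fin 2) (Fin 2) F) *
          ((A⁻¹ : Matrix.SpecialLinearGroup (Fin 2) F) : Matrix (Fin 2) (Fin 2) F) *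
          (((A*B)⁻¹ : Matrix.SpecialLinearGroup (Fin 2) F) : Matrix (Fin 2) (Fin 2) F) := by
      rw [hM, ← Matrix.SpecialLinearGroup.coe_mul, h2]
      simp [Matrix.SpecialLinearGroup.coe_mul]
    rw [h3, Matrix.trace_mul_comm, ← Matrix.mul_assoc, ← Matrix.SpecialLinearGroup.coe_mul,
      inv_mul_cancel, Matrix.SpecialLinearGroup.coe_one, Matrix.one_mul, htrAinv]
  -- tr(M * A) = t*a - a
  have hMA : Matrix.trace (M * N) = t * a - a := by
    have : M * N = a • M - M * ((A⁻¹ : Matrix.SpecialLinearGroup (Fin 2) F) :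
        Matrix (Fin 2) (Fin 2) F) := by
      rw [hAinv]; noncomm_ring
    rw [this, Matrix.trace_sub, Matrix.trace_smul, hMAinv, ← ht, smul_eq_mul]
    ring
  -- main computation
  have hmain : Matrix.trace (((A * B * A⁻¹ * B⁻¹) ^ 2 * A : Matrix.SpecialLinearGroup (Fin 2) F) :
      Matrix (Fin 2) (Fin 2) F) = a * (t ^ 2 - t - 1) := by
    have hcoe : (((A * B * A⁻¹ * B⁻¹) ^ 2 * A : Matrix.SpecialLinearGroup (Fin 2) F) :
        Matrix (Fin 2) (Fin 2) F) = M * M * N := by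
      rw [← hC, hM, hN, sq]
      simp [Matrix.SpecialLinearGroup.coe_mul, Matrix.mul_assoc]
    rw [hcoe, hCH]
    have : (t • M - 1) * N = t • (M * N) - N := by noncomm_ring
    rw [this, Matrix.trace_sub, Matrix.trace_smul, hMA, ← ha, smul_eq_mul]
    ring
  refine ⟨by rw [hmain, ha], ?_⟩
  rw [hmain, hq, mul_zero]
end

section
/- Let F be a field and A, B ∈ SL(2,F), and set s = tr(A·B·A·B⁻¹) and suppose tr(A) = 1 and s² − s − 1 = 0. Then tr(A²·B·A·B⁻¹·A·B·A·B⁻¹) = s² − s − 1 = 0. -/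
open Matrix

lemma sl2_sq {F : Type*} [Field F] (M : Matrix (Fin 2) (Fin 2) F) (h : M.det = 1) :
    M * M = (Matrix.trace M) • M - 1 := by
  rw [Matrix.det_fin_two] at h
  ext i j
  fin_cases i <;> fin_cases j <;>
    simp [Matrix.mul_apply, Fin.sum_univ_two, Matrix.trace_fin_two, Matrix.one_apply] <;>
    (first | ring1 | linear_combination h | linear_combination -h)

theorem trace_A2BABABAB {F : Type*} [Field F]
    (A B : Matrix.SpecialLinearGroup (Fin 2) F) (s : F)
    (hs : s = Matrix.trace ((A * B * A * B⁻¹ : Matrix.SpecialLinearGroup (Fin 2) F) :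
      Matrix (Fin 2) (Fin 2) F))
    (hA : Matrix.trace ((A : Matrix.SpecialLinearGroup (Fin 2) F) :
      Matrix (Fin 2) (Fin 2) F) = 1)
    (hq : s ^ 2 - s - 1 = 0) :
    Matrix.trace ((A ^ 2 * B * A * B⁻¹ * A * B * A * B⁻¹ : Matrix.SpecialLinearGroup (Fin 2) F) :
      Matrix (Fin 2) (Fin 2) F) = s ^ 2 - s - 1 ∧
    Matrix.trace ((A ^ 2 * B * A * B⁻¹ * A * B * A * B⁻¹ : Matrix.SpecialLinearGroup (Fin 2) F) :
      Matrix (Fin 2) (Fin 2) F) = 0 := by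
  set C : Matrix.SpecialLinearGroup (Fin 2) F := A * B * A * B⁻¹ with hC
  set a : Matrix (Fin 2) (Fin 2) F := (A : Matrix (Fin 2) (Fin 2) F) with hadef
  set c : Matrix (Fin 2) (Fin 2) F := (C : Matrix (Fin 2) (Fin 2) F) with hcdef
  have hgrp : A ^ 2 * B * A * B⁻¹ * A * B * A * B⁻¹ = A * C * C := by
    rw [hC, sq]; group
  have hcoe : ((A ^ 2 * B * A * B⁻¹ * A * B * A * B⁻¹ :
      Matrix.SpecialLinearGroup (Fin 2) F) : Matrix (Fin 2) (Fin 2) F) = a * c * c := by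
    rw [hgrp]; push_cast; rfl
  -- Cayley–Hamilton facts
  have hdc : c.det = 1 := C.prop
  have hda : a.det = 1 := A.prop
  have hcc : c * c = s • c - 1 := by rw [sl2_sq c hdc, ← hs]
  have haa : a * a = a - 1 := by
    rw [sl2_sq a hda, hA, one_smul]
  -- trace (a * c) = s - 1
  have hbb : ((B⁻¹ : Matrix.SpecialLinearGroup (Fin 2) F) : Matrix (Fin 2) (Fin 2) F) *
      (B : Matrix (Fin 2) (Fin 2) F) = 1 := by
    rw [← Matrix.SpecialLinearGroup.coe_mul, inv_mul_cancel,
      Matrix.SpecialLinearGroup.coe_one]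
  have hcmat : c = a * ((B : Matrix (Fin 2) (Fin 2) F) * a *
      ((B⁻¹ : Matrix.SpecialLinearGroup (Fin 2) F) : Matrix (Fin 2) (Fin 2) F)) := by
    rw [hcdef, hC]; push_cast; noncomm_ring
  have htac : Matrix.trace (a * c) = s - 1 := by
    have : a * c = c - (B : Matrix (Fin 2) (Fin 2) F) * a *
        ((B⁻¹ : Matrix.SpecialLinearGroup (Fin 2) F) : Matrix (Fin 2) (Fin 2) F) := by
      rw [hcmat, ← mul_assoc, haa]; noncomm_ring
    rw [this, Matrix.trace_sub, Matrix.trace_mul_comm, ← mul_assoc, hbb, one_mul, ← hs, hA]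
  have key : Matrix.trace (a * c * c) = 0 := by
    rw [mul_assoc, hcc, mul_sub, mul_one, Matrix.mul_smul, Matrix.trace_sub,
      Matrix.trace_smul, htac, hA, smul_eq_mul]
    linear_combination hq
  rw [hcoe, key]
  exact ⟨hq.symm, rfl⟩
end

section
/- If x and y are two elements of the symmetric group S₄ that generate S₄ and have the same order, then both x and y have order 4. -/
open Equiv

set_option maxRecDepth 20000 in
private lemma perm4_pow : ∀ g : Equiv.Perm (Fin 4), g ^ 4 = 1 ∨ g ^ 3 = 1 := by decide

set_option maxRecDepth 20000 in
private lemma perm4_pow' : ∀ g : Equiv.Perm (Fin 4), g ^ 6 = 1 ∨ g ^ 4 = 1 := by decide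

private lemma dihedral_small (x y : Equiv.Perm (Fin 4)) (hx : x ^ 2 = 1) (hy : y ^ 2 = 1)
    (m : ℕ) (hm : 0 < m) (hzm : (x * y) ^ m = 1) (hcard : 2 * m < 24)
    (hgen : Subgroup.closure {x, y} = ⊤) : False := by
  set z := x * y with hz
  have hxx : x * x = 1 := by rw [← pow_two]; exact hx
  have hyy : y * y = 1 := by rw [← pow_two]; exact hy
  have hinvx : x⁻¹ = x := by rw [inv_eq_iff_mul_eq_one]; exact hxx
  have hconj : ∀ i : ℤ, x * z ^ i * x⁻¹ = z ^ (-i) := by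
    intro i
    have hinvy : y⁻¹ = y := by rw [inv_eq_iff_mul_eq_one]; exact hyy
    have h1 : x * z * x⁻¹ = z⁻¹ := by
      rw [hz, hinvx, ← mul_assoc x x y, hxx, one_mul, mul_inv_rev, hinvx, hinvy]
    calc x * z ^ i * x⁻¹ = (x * z * x⁻¹) ^ i := by rw [conj_zpow]
    _ = z ^ (-i) := by rw [h1, inv_zpow, zpow_neg]
  have hcomm : ∀ i : ℤ, z ^ i * x = x * z ^ (-i) := by
    intro i
    have := hconj i
    rw [hinvx] at this
    calc z ^ i * x = x * (x * z ^ i * x) := by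
          rw [← mul_assoc, ← mul_assoc, hxx, one_mul]
    _ = x * z ^ (-i) := by rw [this]
  have key : ∀ g : Equiv.Perm (Fin 4), ∃ i : ℤ, g = z ^ i ∨ g = x * z ^ i := by
    intro g
    have hg : g ∈ Subgroup.closure {x, y} := hgen ▸ Subgroup.mem_top g
    induction hg using Subgroup.closure_induction with
    | mem g hgm =>
      rcases hgm with h | h
      · exact ⟨0, Or.inr (by rw [h, zpow_zero, mul_one])⟩
      · refine ⟨1, Or.inr ?_⟩
        simp only [Set.mem_singleton_iff] at h
        rw [h, zpow_one, hz, ← mul_assoc, hxx, one_mul]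
    | one => exact ⟨0, Or.inl (by rw [zpow_zero])⟩
    | mul a b _ _ ha hb =>
      obtain ⟨i, hi⟩ := ha
      obtain ⟨j, hj⟩ := hb
      rcases hi with hi | hi <;> rcases hj with hj | hj
      · exact ⟨i + j, Or.inl (by rw [hi, hj, zpow_add])⟩
      · refine ⟨j - i, Or.inr ?_⟩
        rw [hi, hj, ← mul_assoc, hcomm i, mul_assoc, ← zpow_add]
        ring_nf
      · exact ⟨i + j, Or.inr (by rw [hi, hj, mul_assoc, ← zpow_add])⟩
      · refine ⟨j - i, Or.inl ?_⟩
        rw [hi, hj]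
        calc x * z ^ i * (x * z ^ j) = x * (z ^ i * x) * z ^ j := by group
        _ = x * (x * z ^ (-i)) * z ^ j := by rw [hcomm i]
        _ = z ^ (j - i) := by rw [← mul_assoc, hxx, one_mul, ← zpow_add]; ring_nf
    | inv a _ ha =>
      obtain ⟨i, hi⟩ := ha
      rcases hi with hi | hi
      · exact ⟨-i, Or.inl (by rw [hi, ← zpow_neg])⟩
      · refine ⟨i, Or.inr ?_⟩
        rw [hi, mul_inv_rev, hinvx, ← zpow_neg, hcomm (-i), neg_neg]
  have hsurj : Function.Surjective
      (fun p : Fin m × Bool => (cond p.2 x 1) * z ^ (p.1 : ℕ)) := by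
    intro g
    obtain ⟨i, hi⟩ := key g
    have hred : z ^ i = z ^ ((i % (m : ℤ)).toNat : ℕ) := by
      rw [zpow_eq_zpow_emod' i hzm, ← zpow_natCast,
        Int.toNat_of_nonneg (Int.emod_nonneg i (by exact_mod_cast hm.ne'))]
    have hlt : (i % (m : ℤ)).toNat < m := by
      have := Int.emod_lt_of_pos i (by exact_mod_cast hm : (0:ℤ) < m)
      omega
    rcases hi with hi | hi
    · exact ⟨(⟨(i % (m : ℤ)).toNat, hlt⟩, false), by simp [hi, hred]⟩
    · exact ⟨(⟨(i % (m : ℤ)).toNat, hlt⟩, true), by simp [hi, hred]⟩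
  have hle := Fintype.card_le_of_surjective _ hsurj
  simp [Fintype.card_perm, Nat.factorial] at hle
  omega

theorem gen_pair_S4_same_order (x y : Equiv.Perm (Fin 4))
    (hgen : Subgroup.closure {x, y} = ⊤)
    (hord : orderOf x = orderOf y) :
    orderOf x = 4 ∧ orderOf y = 4 := by
  have hdvd : orderOf x ∣ 4 ∨ orderOf x ∣ 3 := by
    rcases perm4_pow x with h | h
    · exact Or.inl (orderOf_dvd_of_pow_eq_one h)
    · exact Or.inr (orderOf_dvd_of_pow_eq_one h)
  have hpos : 0 < orderOf x := orderOf_pos x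
  have hle : orderOf x ≤ 4 := by
    rcases hdvd with h | h
    · exact Nat.le_of_dvd (by norm_num) h
    · exact le_trans (Nat.le_of_dvd (by norm_num) h) (by norm_num)
  have hxn : x ^ orderOf x = 1 := pow_orderOf_eq_one x
  have hyn : y ^ orderOf x = 1 := by rw [hord]; exact pow_orderOf_eq_one y
  interval_cases h : orderOf x
  · -- order 1
    exfalso
    rw [pow_one] at hxn hyn
    rw [hxn, hyn, Set.pair_eq_singleton, Subgroup.closure_singleton_one] at hgen
    have : Equiv.swap (0 : Fin 4) 1 ∈ (⊥ : Subgroup (Equiv.Perm (Fin 4))) := by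
      rw [hgen]; trivial
    exact absurd (Subgroup.mem_bot.mp this) (by decide)
  · -- order 2
    exfalso
    rcases perm4_pow' (x * y) with hm | hm
    · exact dihedral_small x y hxn hyn 6 (by norm_num) hm (by norm_num) hgen
    · exact dihedral_small x y hxn hyn 4 (by norm_num) hm (by norm_num) hgen
  · -- order 3
    exfalso
    have hsign : ∀ g : Equiv.Perm (Fin 4), g ^ 3 = 1 → Equiv.Perm.sign g = 1 := by
      intro g hg
      have h3 : (Equiv.Perm.sign g) ^ 3 = 1 := by rw [← map_pow, hg, map_one]
      have h2 : (Equiv.Perm.sign g) ^ 2 = 1 := Int.units_sq _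
      calc Equiv.Perm.sign g = Equiv.Perm.sign g ^ 3 * (Equiv.Perm.sign g ^ 2)⁻¹ := by group
      _ = 1 := by rw [h3, h2]; simp
    have hsub : Subgroup.closure {x, y} ≤ alternatingGroup (Fin 4) := by
      rw [Subgroup.closure_le]
      intro g hg
      rcases hg with h | h
      · exact Equiv.Perm.mem_alternatingGroup.mpr (h ▸ hsign x hxn)
      · simp only [Set.mem_singleton_iff] at h
        exact Equiv.Perm.mem_alternatingGroup.mpr (h ▸ hsign y hyn)
    rw [hgen] at hsub
    have hmem : Equiv.swap (0 : Fin 4) 1 ∈ alternatingGroup (Fin 4) :=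
      hsub (Subgroup.mem_top _)
    have := Equiv.Perm.mem_alternatingGroup.mp hmem
    rw [Equiv.Perm.sign_swap (by decide)] at this
    exact absurd this (by decide)
  · exact ⟨rfl, hord.symm⟩
end

section
/- If x and y are two elements of the alternating group A₅ that generate A₅ and have the same order n, then n = 3 or n = 5. -/
set_option maxRecDepth 10000 in
private lemma A5_pow_aux : ∀ g : Equiv.Perm (Fin 5), Equiv.Perm.sign g = 1 →
    g ^ 2 = 1 ∨ g ^ 3 = 1 ∨ g ^ 5 = 1 := by decide

private lemma A5_order (g : alternatingGroup (Fin 5)) :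
    orderOf g = 1 ∨ orderOf g = 2 ∨ orderOf g = 3 ∨ orderOf g = 5 := by
  have h := A5_pow_aux (g : Equiv.Perm (Fin 5))
    (Equiv.Perm.mem_alternatingGroup.mp g.2)
  have h' : g ^ 2 = 1 ∨ g ^ 3 = 1 ∨ g ^ 5 = 1 := by
    rcases h with h | h | h
    · exact Or.inl (by ext1; exact_mod_cast h)
    · exact Or.inr (Or.inl (by ext1; exact_mod_cast h))
    · exact Or.inr (Or.inr (by ext1; exact_mod_cast h))
  rcases h' with h | h | h
  · rcases (Nat.dvd_prime Nat.prime_two).mp (orderOf_dvd_of_pow_eq_one h) with h | h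
    · exact Or.inl h
    · exact Or.inr (Or.inl h)
  · rcases (Nat.dvd_prime Nat.prime_three).mp (orderOf_dvd_of_pow_eq_one h) with h | h
    · exact Or.inl h
    · exact Or.inr (Or.inr (Or.inl h))
  · rcases (Nat.dvd_prime (by norm_num)).mp (orderOf_dvd_of_pow_eq_one h) with h | h
    · exact Or.inl h
    · exact Or.inr (Or.inr (Or.inr h))

private lemma A5_card : Nat.card (alternatingGroup (Fin 5)) = 60 := by
  have h : 2 * Fintype.card (alternatingGroup (Fin 5)) = Fintype.card (Equiv.Perm (Fin 5)) :=
    two_mul_card_alternatingGroup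
  rw [Fintype.card_perm, Fintype.card_fin] at h
  rw [Nat.card_eq_fintype_card]
  have h5 : Nat.factorial 5 = 120 := by norm_num [Nat.factorial]
  omega

theorem gen_pair_A5_same_order (x y : alternatingGroup (Fin 5))
    (hgen : Subgroup.closure {x, y} = ⊤)
    (n : ℕ) (hx : orderOf x = n) (hy : orderOf y = n) :
    n = 3 ∨ n = 5 := by
  have hcard : Nat.card (alternatingGroup (Fin 5)) = 60 := A5_card
  have hn := A5_order x
  rw [hx] at hn
  rcases hn with rfl | rfl | rfl | rfl
  · -- n = 1 : x = y = 1, closure trivial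
    exfalso
    have hx1 : x = 1 := orderOf_eq_one_iff.mp hx
    have hy1 : y = 1 := orderOf_eq_one_iff.mp hy
    rw [hx1, hy1, Set.pair_eq_singleton, Subgroup.closure_singleton_one] at hgen
    have : Nat.card ((⊥ : Subgroup (alternatingGroup (Fin 5)))) = 60 := by
      rw [hgen, Subgroup.card_top, hcard]
    simp at this
  · -- n = 2 : dihedral argument via simplicity
    exfalso
    have hx2 : x ^ 2 = 1 := by rw [← hx]; exact pow_orderOf_eq_one x
    have hy2 : y ^ 2 = 1 := by rw [← hy]; exact pow_orderOf_eq_one y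
    have hxx : x * x = 1 := by rw [← sq]; exact hx2
    have hyy : y * y = 1 := by rw [← sq]; exact hy2
    have hxinv : x⁻¹ = x := by
      rw [inv_eq_iff_mul_eq_one]; exact hxx
    have hyinv : y⁻¹ = y := by
      rw [inv_eq_iff_mul_eq_one]; exact hyy
    set z := x * y with hz
    have hconj : x * z * x⁻¹ = z⁻¹ := by
      rw [hxinv, mul_inv_rev, hxinv, hyinv, hz]
      calc x * (x * y) * x = x * x * y * x := by rw [mul_assoc x x y]
        _ = y * x := by rw [hxx, one_mul]
    have key : ∀ k : ℤ, x * z ^ k * x⁻¹ = z ^ (-k) := by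
      intro k
      have h1 : x * z ^ k * x⁻¹ = (x * z * x⁻¹) ^ k := by
        rw [conj_zpow]
      rw [h1, hconj, ← zpow_neg_one, ← zpow_mul, neg_one_mul]
    have hxn : x ∈ Subgroup.normalizer (Subgroup.zpowers z : Set (alternatingGroup (Fin 5))) := by
      rw [Subgroup.mem_normalizer_iff]
      intro h
      constructor
      · rintro ⟨k, rfl⟩
        exact ⟨-k, (key k).symm⟩
      · rintro ⟨k, hk⟩
        refine ⟨-k, ?_⟩
        have h2 : x⁻¹ * (x * h * x⁻¹) * x = h := by group
        show z ^ (-k) = h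
        rw [← h2, ← hk]
        show z ^ (-k) = x⁻¹ * z ^ k * x
        rw [← key k, hxinv]
    have hyn : y ∈ Subgroup.normalizer (Subgroup.zpowers z : Set (alternatingGroup (Fin 5))) := by
      have hzmem : z ∈ Subgroup.normalizer (Subgroup.zpowers z : Set (alternatingGroup (Fin 5))) :=
        Subgroup.le_normalizer (Subgroup.mem_zpowers z)
      have h3 : y = x⁻¹ * z := by rw [hz, ← mul_assoc, inv_mul_cancel, one_mul]
      rw [h3]
      exact mul_mem (inv_mem hxn) hzmem
    have hntop : Subgroup.normalizer (Subgroup.zpowers z : Set (alternatingGroup (Fin 5))) = ⊤ := by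
      rw [← top_le_iff, ← hgen, Subgroup.closure_le]
      rintro g (rfl | rfl)
      · exact hxn
      · exact hyn
    have hnormal : (Subgroup.zpowers z).Normal :=
      Subgroup.normalizer_eq_top_iff.mp hntop
    rcases hnormal.eq_bot_or_eq_top with hbot | htop
    · -- z = 1, so y = x and the group is cyclic of order 2
      have hz1 : z = 1 := Subgroup.zpowers_eq_bot.mp hbot
      have hyx : y = x := by
        have : y = x⁻¹ * z := by rw [hz, ← mul_assoc, inv_mul_cancel, one_mul]
        rw [this, hz1, mul_one, hxinv]
      rw [hyx, Set.pair_eq_singleton] at hgen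
      have h60 : Nat.card (Subgroup.zpowers x) = 60 := by
        rw [Subgroup.zpowers_eq_closure, hgen, Subgroup.card_top, hcard]
      rw [Nat.card_zpowers, hx] at h60
      omega
    · have h60 : Nat.card (Subgroup.zpowers z) = 60 := by
        rw [htop, Subgroup.card_top, hcard]
      rw [Nat.card_zpowers] at h60
      rcases A5_order z with h | h | h | h <;> omega
  · exact Or.inl rfl
  · exact Or.inr rfl
end
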